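/- Let a₁, b₁, c₁, a₂, b₂, c₂ ∈ ℝ and let A = [[1, a₁, b₁],[0, 1, c₁],[0, 0, 1]] and B = [[1, a₂, b₂],[0, 1, c₂],[0, 0, 1]] be elements of SL(3,ℝ) with A·B = B·A. If the homomorphism ρ : ℤ² → SL(3,ℝ) defined by ρ(n, m) = Aⁿ·Bᵐ is regular, then a₁c₂ = 0 and a₂c₁ = 0. -/

import Mathlib

open Filter

/-- Frobenius (entrywise ℓ²) norm of a 3×3 real matrix. -/
noncomputable def frobNorm (g : Matrix (Fin 3) (Fin 3) ℝ) : ℝ :=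
  Real.sqrt (∑ i, ∑ j, (g i j) ^ 2)

/-- A sequence in SL(3,ℝ) is regular if ‖gₙ‖²/‖gₙ⁻¹‖ → ∞. -/
def IsRegularSeq (g : ℕ → Matrix.SpecialLinearGroup (Fin 3) ℝ) : Prop :=
  Tendsto (fun n => (frobNorm ↑(g n)) ^ 2 / frobNorm ↑((g n)⁻¹)) atTop atTop

section AuxClaim2

private lemma quad_root' (A B C S : ℝ) (hA : A ≠ 0) :
    A*((-B+S)/(2*A))^2 + B*((-B+S)/(2*A)) + C = (S^2 - (B^2 - 4*A*C))/(4*A) := by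
  field_simp
  ring

private lemma zv_decomp' (a₁ b₁ c₁ a₂ b₂ c₂ n m t : ℝ) :
    (n*b₁ + (n*(n-1)/2)*(a₁*c₁) + (n*a₁)*(m*c₂) + (m*b₂ + (m*(m-1)/2)*(a₂*c₂)))
      = (m - t) * (c₂*(n*a₁ + m*a₂) + (b₂ - a₂*c₂/2) - (a₂*c₂/2)*(m - t))
        + ((a₂*c₂/2)*t^2 + (a₁*c₂*n + (b₂ - a₂*c₂/2))*t
            + ((a₁*c₁/2)*n^2 + (b₁ - a₁*c₁/2)*n)) := by
  ring

private lemma disc_eq' (a₁ b₁ c₁ a₂ b₂ c₂ n : ℝ) (hac : a₁*c₂ = a₂*c₁) :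
    (a₁*c₂*n + (b₂ - a₂*c₂/2))^2 - 4*(a₂*c₂/2)*((a₁*c₁/2)*n^2 + (b₁ - a₁*c₁/2)*n)
      = (b₂ - a₂*c₂/2)^2 + (2*c₂*(a₁*(b₂ - a₂*c₂/2) - a₂*(b₁ - a₁*c₁/2)))*n := by
  linear_combination (n^2*a₁*c₂) * hac

private lemma z_abs_bound' (c₂ β₂ A2 x δ : ℝ) (hδ : |δ| ≤ 1/2) :
    |δ * (c₂*x + β₂ - A2*δ)| ≤ (|c₂| + |β₂| + |A2| + 1)*(1+|x|) := by
  have t2 : |c₂*x + β₂ - A2*δ| ≤ |c₂| * |x| + |β₂| + |A2| * (1/2) := by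
    calc |c₂*x + β₂ - A2*δ| = |(c₂*x + β₂) + -(A2*δ)| := by ring_nf
      _ ≤ |c₂*x + β₂| + |-(A2*δ)| := abs_add_le _ _
      _ ≤ (|c₂*x| + |β₂|) + |A2*δ| := by
          rw [abs_neg]; exact add_le_add (abs_add_le _ _) le_rfl
      _ ≤ |c₂| * |x| + |β₂| + |A2| * (1/2) := by
          rw [abs_mul, abs_mul]
          have := mul_le_mul_of_nonneg_left hδ (abs_nonneg A2)
          linarith
  rw [abs_mul]
  have h3 : |δ| * |c₂*x + β₂ - A2*δ| ≤ (1/2) * (|c₂| * |x| + |β₂| + |A2| * (1/2)) := by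
    apply mul_le_mul hδ t2 (abs_nonneg _) (by norm_num)
  have := abs_nonneg x; have := abs_nonneg c₂; have := abs_nonneg β₂
  have := abs_nonneg A2
  have := mul_nonneg (abs_nonneg c₂) (abs_nonneg x)
  nlinarith

private lemma ratio_bound' (lam K x z : ℝ) (hlam : lam ≠ 0) (hK : 1 ≤ K)
    (hzb : |z| ≤ K*(1+|x|)) :
    (3 + x^2 + (lam*x)^2 + z^2) /
      Real.sqrt (3 + x^2 + (lam*x)^2 + (x*(lam*x) - z)^2) ≤
    max ((4+lam^2+2*K^2)*(1+(max 1 (4*K/|lam|))^2)) (4*(4+lam^2+2*K^2)/|lam|) := by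
  have hL : (0:ℝ) < |lam| := abs_pos.mpr hlam
  have hC₁ : (0:ℝ) < 4+lam^2+2*K^2 := by positivity
  have hD1 : 1 ≤ Real.sqrt (3 + x^2 + (lam*x)^2 + (x*(lam*x) - z)^2) := by
    rw [Real.one_le_sqrt]
    nlinarith [sq_nonneg x, sq_nonneg (lam*x), sq_nonneg (x*(lam*x) - z)]
  have hN_nn : (0:ℝ) ≤ 3 + x^2 + (lam*x)^2 + z^2 := by positivity
  have hz2 : z^2 ≤ 2*K^2*(1+x^2) := by
    have h1 : |z|^2 ≤ (K*(1+|x|))^2 := pow_le_pow_left₀ (abs_nonneg z) hzb 2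
    have h2 : (K*(1+|x|))^2 ≤ 2*K^2*(1+x^2) := by
      nlinarith [sq_nonneg (1-|x|), sq_abs x, sq_nonneg K, abs_nonneg x]
    calc z^2 = |z|^2 := (sq_abs z).symm
      _ ≤ (K*(1+|x|))^2 := h1
      _ ≤ 2*K^2*(1+x^2) := h2
  have hNle : 3 + x^2 + (lam*x)^2 + z^2 ≤ (4+lam^2+2*K^2)*(1+x^2) := by
    nlinarith [sq_nonneg x, sq_nonneg lam, mul_nonneg (sq_nonneg lam) (sq_nonneg x)]
  rcases le_or_gt |x| (max 1 (4*K/|lam|)) with hcase | hcase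
  · refine le_trans (le_trans (div_le_self hN_nn hD1) ?_) (le_max_left _ _)
    have hx2 : x^2 ≤ (max 1 (4*K/|lam|))^2 := by
      calc x^2 = |x|^2 := (sq_abs x).symm
        _ ≤ (max 1 (4*K/|lam|))^2 := pow_le_pow_left₀ (abs_nonneg x) hcase 2
    nlinarith
  · have hx1 : 1 ≤ |x| := le_trans (le_max_left _ _) hcase.le
    have hx4 : 4*K ≤ |lam| * |x| := by
      have := le_trans (le_max_right 1 (4*K/|lam|)) hcase.le
      rw [div_le_iff₀ hL] at this
      linarith [this]
    have hx2 : 1 ≤ x^2 := by nlinarith [sq_abs x]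
    have hw : |lam| * x^2/2 ≤ |x*(lam*x) - z| := by
      have habs : |lam*x^2| - |z| ≤ |lam*x^2 - z| := abs_sub_abs_le_abs_sub _ _
      have h5 : |lam*x^2| = |lam| * x^2 := by
        rw [abs_mul, abs_of_nonneg (sq_nonneg x)]
      have h6 : x*(lam*x) = lam*x^2 := by ring
      rw [h6]
      have h7 : |z| ≤ 2*K * |x| := by nlinarith [abs_nonneg x]
      have h8 : 2*K * |x| ≤ |lam| * x^2/2 := by nlinarith [sq_abs x, abs_nonneg x]
      linarith [habs, h5.ge, h5.le]
    have hDlow : |lam| * x^2/2 ≤ Real.sqrt (3 + x^2 + (lam*x)^2 + (x*(lam*x) - z)^2) := by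
      refine le_trans hw ?_
      calc |x*(lam*x) - z| = Real.sqrt ((x*(lam*x) - z)^2) := (Real.sqrt_sq_eq_abs _).symm
        _ ≤ _ := Real.sqrt_le_sqrt (by nlinarith [sq_nonneg x, sq_nonneg (lam*x)])
    have hstep : (3 + x^2 + (lam*x)^2 + z^2) /
        Real.sqrt (3 + x^2 + (lam*x)^2 + (x*(lam*x) - z)^2)
        ≤ (2*(4+lam^2+2*K^2)*x^2) / (|lam| * x^2/2) := by
      apply div_le_div₀ (by positivity) ?_ (by positivity) hDlow
      nlinarith
    refine le_trans hstep (le_trans (le_of_eq ?_) (le_max_right _ _))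
    have hx0 : x ≠ 0 := by intro h; rw [h] at hx2; norm_num at hx2
    field_simp
    ring

private lemma sl3_inv_coe (g : Matrix.SpecialLinearGroup (Fin 3) ℝ) (x y z : ℝ)
    (h : (g : Matrix (Fin 3) (Fin 3) ℝ) = !![1, x, z; 0, 1, y; 0, 0, 1]) :
    ((g⁻¹ : Matrix.SpecialLinearGroup (Fin 3) ℝ) : Matrix (Fin 3) (Fin 3) ℝ)
      = !![1, -x, x*y - z; 0, 1, -y; 0, 0, 1] := by
  have h1 : (g : Matrix (Fin 3) (Fin 3) ℝ) * !![1, -x, x*y - z; 0, 1, -y; 0, 0, 1] = 1 := by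
    rw [h, Matrix.mul_fin_three, Matrix.one_fin_three]
    congr 1 <;> ring
  have h2 : ((g⁻¹ : Matrix.SpecialLinearGroup (Fin 3) ℝ) : Matrix (Fin 3) (Fin 3) ℝ)
      * (g : Matrix (Fin 3) (Fin 3) ℝ) = 1 := by
    rw [← Matrix.SpecialLinearGroup.coe_mul, inv_mul_cancel, Matrix.SpecialLinearGroup.coe_one]
  calc ((g⁻¹ : Matrix.SpecialLinearGroup (Fin 3) ℝ) : Matrix (Fin 3) (Fin 3) ℝ)
      = ((g⁻¹ : Matrix.SpecialLinearGroup (Fin 3) ℝ) : Matrix (Fin 3) (Fin 3) ℝ) *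
        ((g : Matrix (Fin 3) (Fin 3) ℝ) * !![1, -x, x*y - z; 0, 1, -y; 0, 0, 1]) := by
        rw [h1, mul_one]
    _ = (((g⁻¹ : Matrix.SpecialLinearGroup (Fin 3) ℝ) : Matrix (Fin 3) (Fin 3) ℝ) *
        (g : Matrix (Fin 3) (Fin 3) ℝ)) * !![1, -x, x*y - z; 0, 1, -y; 0, 0, 1] := by
        rw [mul_assoc]
    _ = !![1, -x, x*y - z; 0, 1, -y; 0, 0, 1] := by rw [h2, one_mul]

private lemma sl3_zpow_coe (a b c : ℝ) (A : Matrix.SpecialLinearGroup (Fin 3) ℝ)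
    (hA : (A : Matrix (Fin 3) (Fin 3) ℝ) = !![1, a, b; 0, 1, c; 0, 0, 1]) (n : ℤ) :
    ((A ^ n : Matrix.SpecialLinearGroup (Fin 3) ℝ) : Matrix (Fin 3) (Fin 3) ℝ) =
      !![1, n*a, n*b + (n*(n-1)/2)*(a*c); 0, 1, n*c; 0, 0, 1] := by
  have hAinv := sl3_inv_coe A a c b hA
  induction n using Int.induction_on with
  | zero => simp [Matrix.one_fin_three]
  | succ k ih =>
      rw [_root_.zpow_add_one, Matrix.SpecialLinearGroup.coe_mul, ih, hA, Matrix.mul_fin_three]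
      push_cast
      congr 1 <;> ring
  | pred k ih =>
      rw [show (-(k:ℤ) - 1) = ((-(k:ℤ)) - 1) by ring, _root_.zpow_sub_one,
        Matrix.SpecialLinearGroup.coe_mul, ih, hAinv, Matrix.mul_fin_three]
      push_cast
      congr 1 <;> ring

private lemma frob_explicit (x y z : ℝ) :
    frobNorm !![1, x, z; 0, 1, y; 0, 0, 1] = Real.sqrt (3 + x^2 + y^2 + z^2) := by
  unfold frobNorm
  congr 1
  simp [Fin.sum_univ_three, Matrix.vecHead, Matrix.vecTail]
  ring

/-- first-row off-diagonal entry of AⁿBᵐ -/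
private noncomputable def xv (a₁ a₂ : ℝ) (p : ℤ × ℤ) : ℝ := (p.1 : ℝ)*a₁ + (p.2 : ℝ)*a₂

/-- corner entry of AⁿBᵐ -/
private noncomputable def zv (a₁ b₁ c₁ a₂ b₂ c₂ : ℝ) (p : ℤ × ℤ) : ℝ :=
  ((p.1 : ℝ)*b₁ + ((p.1 : ℝ)*((p.1 : ℝ)-1)/2)*(a₁*c₁) + ((p.1 : ℝ)*a₁)*((p.2 : ℝ)*c₂)
    + ((p.2 : ℝ)*b₂ + ((p.2 : ℝ)*((p.2 : ℝ)-1)/2)*(a₂*c₂)))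

private lemma exists_bad_seq (a₁ b₁ c₁ a₂ b₂ c₂ : ℝ) (hac : a₁*c₂ = a₂*c₁)
    (ha₁ : a₁ ≠ 0) (ha₂ : a₂ ≠ 0) (hc₁ : c₁ ≠ 0) (hc₂ : c₂ ≠ 0) :
    ∃ γ : ℕ → ℤ × ℤ, Function.Injective γ ∧ ∃ C : ℝ, ∀ k,
      (3 + xv a₁ a₂ (γ k)^2 + xv c₁ c₂ (γ k)^2 + zv a₁ b₁ c₁ a₂ b₂ c₂ (γ k)^2) /
        Real.sqrt (3 + xv a₁ a₂ (γ k)^2 + xv c₁ c₂ (γ k)^2 +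
          (xv a₁ a₂ (γ k) * xv c₁ c₂ (γ k) - zv a₁ b₁ c₁ a₂ b₂ c₂ (γ k))^2) ≤ C := by
  classical
  have hA2 : a₂*c₂/2 ≠ 0 := div_ne_zero (mul_ne_zero ha₂ hc₂) two_ne_zero
  set lam : ℝ := c₁ / a₁ with hlam
  have hlamne : lam ≠ 0 := div_ne_zero hc₁ ha₁
  set β₁ : ℝ := b₁ - a₁*c₁/2 with hβ₁
  set β₂ : ℝ := b₂ - a₂*c₂/2 with hβ₂
  set ν : ℝ := 2*c₂*(a₁*β₂ - a₂*β₁) with hν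
  set K : ℝ := |c₂| + |β₂| + |a₂*c₂/2| + 1 with hK
  have hK1 : 1 ≤ K := by
    rw [hK]
    have := abs_nonneg c₂; have := abs_nonneg β₂; have := abs_nonneg (a₂*c₂/2); linarith
  set s : ℤ := if 0 ≤ ν then 1 else -1 with hs
  have hs0 : s ≠ 0 := by rw [hs]; split <;> decide
  set tf : ℕ → ℝ := fun k =>
    (-(a₁*c₂*((s*(k:ℤ) : ℤ) : ℝ) + β₂) + Real.sqrt (β₂^2 + ν*((s*(k:ℤ) : ℤ) : ℝ)))
      /(2*(a₂*c₂/2)) with htf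
  refine ⟨fun k => (s*(k:ℤ), round (tf k)), ?_, ?_⟩
  · intro k₁ k₂ h
    have h1 : s * (k₁ : ℤ) = s * (k₂ : ℤ) := congrArg Prod.fst h
    exact_mod_cast mul_left_cancel₀ hs0 h1
  refine ⟨max ((4+lam^2+2*K^2)*(1+(max 1 (4*K/|lam|))^2)) (4*(4+lam^2+2*K^2)/|lam|),
    fun k => ?_⟩
  simp only
  set n : ℤ := s*(k:ℤ) with hn
  set m : ℤ := round (tf k) with hm
  set x : ℝ := xv a₁ a₂ (n, m) with hx
  set z : ℝ := zv a₁ b₁ c₁ a₂ b₂ c₂ (n, m) with hz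
  -- y = lam * x
  have hy : xv c₁ c₂ (n, m) = lam * x := by
    rw [hx]
    simp only [xv, hlam]
    field_simp
    linear_combination ((m : ℝ)) * hac
  rw [hy]
  -- the discriminant is nonnegative
  have hDnn : 0 ≤ β₂^2 + ν*((n : ℤ) : ℝ) := by
    have h2 : 0 ≤ ν*((n : ℤ) : ℝ) := by
      rcases le_or_gt 0 ν with h | h
      · have hs1 : s = 1 := by rw [hs, if_pos h]
        rw [hn, hs1]; push_cast; positivity
      · have hs1 : s = -1 := by rw [hs, if_neg (not_le.mpr h)]
        rw [hn, hs1]; push_cast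
        nlinarith [Nat.cast_nonneg (α := ℝ) k]
    nlinarith [sq_nonneg β₂]
  -- the root property
  have hroot : (a₂*c₂/2)*(tf k)^2 + (a₁*c₂*((n:ℤ):ℝ) + β₂)*(tf k)
      + ((a₁*c₁/2)*((n:ℤ):ℝ)^2 + β₁*((n:ℤ):ℝ)) = 0 := by
    have htfk : tf k = (-(a₁*c₂*((n:ℤ):ℝ) + β₂) + Real.sqrt (β₂^2 + ν*((n:ℤ):ℝ)))
        /(2*(a₂*c₂/2)) := by rw [htf]
    rw [htfk, quad_root' _ _ _ _ hA2, Real.sq_sqrt hDnn]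
    rw [hβ₁, hβ₂, hν, disc_eq' a₁ b₁ c₁ a₂ b₂ c₂ ((n:ℤ):ℝ) hac]
    simp only [hβ₁, hβ₂, sub_self, zero_div]
  -- z in terms of the root
  have hzval : z = ((m : ℝ) - tf k) * (c₂ * x + β₂ - (a₂*c₂/2)*((m : ℝ) - tf k)) := by
    rw [hz, hx]
    simp only [xv, zv]
    rw [zv_decomp' a₁ b₁ c₁ a₂ b₂ c₂ ((n:ℤ):ℝ) ((m:ℤ):ℝ) (tf k)]
    rw [hβ₁, hβ₂] at hroot
    linear_combination hroot
  -- |z| ≤ K (1 + |x|)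
  have hδ : |(m : ℝ) - tf k| ≤ 1/2 := by
    rw [hm]
    rw [abs_sub_comm]
    exact abs_sub_round (tf k)
  have hzb : |z| ≤ K*(1+|x|) := by
    rw [hzval, hK]
    exact z_abs_bound' c₂ β₂ (a₂*c₂/2) x ((m : ℝ) - tf k) hδ
  exact ratio_bound' lam K x z hlamne hK1 hzb

end AuxClaim2

/-- If the homomorphism ℤ² → SL(3,ℝ), (n,m) ↦ AⁿBᵐ, with A, B commuting upper
unitriangular matrices, is regular, then a₁c₂ = a₂c₁ = 0 (Claim 2). -/
theorem regular_unipotent_Z2_offdiag_vanish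
    (a₁ b₁ c₁ a₂ b₂ c₂ : ℝ)
    (A B : Matrix.SpecialLinearGroup (Fin 3) ℝ)
    (hA : (A : Matrix (Fin 3) (Fin 3) ℝ) = !![1, a₁, b₁; 0, 1, c₁; 0, 0, 1])
    (hB : (B : Matrix (Fin 3) (Fin 3) ℝ) = !![1, a₂, b₂; 0, 1, c₂; 0, 0, 1])
    (hcomm : A * B = B * A)
    (hreg : ∀ γ : ℕ → ℤ × ℤ, Function.Injective γ →
      IsRegularSeq fun k => A ^ (γ k).1 * B ^ (γ k).2) :
    a₁ * c₂ = 0 ∧ a₂ * c₁ = 0 := by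
  have hAB : ((A*B : Matrix.SpecialLinearGroup (Fin 3) ℝ) : Matrix (Fin 3) (Fin 3) ℝ)
      = ((B*A : Matrix.SpecialLinearGroup (Fin 3) ℝ) : Matrix (Fin 3) (Fin 3) ℝ) := by
    rw [hcomm]
  rw [Matrix.SpecialLinearGroup.coe_mul, Matrix.SpecialLinearGroup.coe_mul, hA, hB,
    Matrix.mul_fin_three, Matrix.mul_fin_three] at hAB
  have hac : a₁ * c₂ = a₂ * c₁ := by
    have h02 := congrFun (congrFun hAB 0) 2
    simp at h02
    linarith
  have hsuf : a₁ * c₂ = 0 → a₁ * c₂ = 0 ∧ a₂ * c₁ = 0 := by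
    intro h0
    exact ⟨h0, by rw [← hac]; exact h0⟩
  apply hsuf
  by_contra hne
  have ha₁ : a₁ ≠ 0 := fun h => hne (by rw [h, zero_mul])
  have hc₂ : c₂ ≠ 0 := fun h => hne (by rw [h, mul_zero])
  have ha₂ : a₂ ≠ 0 := fun h => hne (by rw [hac, h, zero_mul])
  have hc₁ : c₁ ≠ 0 := fun h => hne (by rw [hac, h, mul_zero])
  obtain ⟨γ, hinj, C, hC⟩ := exists_bad_seq a₁ b₁ c₁ a₂ b₂ c₂ hac ha₁ ha₂ hc₁ hc₂
  have hten := hreg γ hinj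
  unfold IsRegularSeq at hten
  obtain ⟨k, hk⟩ := (hten.eventually_ge_atTop (C+1)).exists
  -- compute the regularity quantity at step k
  have hcoe : ((A ^ (γ k).1 * B ^ (γ k).2 : Matrix.SpecialLinearGroup (Fin 3) ℝ)
      : Matrix (Fin 3) (Fin 3) ℝ)
      = !![1, xv a₁ a₂ (γ k), zv a₁ b₁ c₁ a₂ b₂ c₂ (γ k); 0, 1, xv c₁ c₂ (γ k); 0, 0, 1] := by
    rw [Matrix.SpecialLinearGroup.coe_mul, sl3_zpow_coe a₁ b₁ c₁ A hA (γ k).1,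
      sl3_zpow_coe a₂ b₂ c₂ B hB (γ k).2, Matrix.mul_fin_three]
    simp only [xv, zv]
    congr 1 <;> ring
  have hinv := sl3_inv_coe _ _ _ _ hcoe
  have hnum : frobNorm ((A ^ (γ k).1 * B ^ (γ k).2 : Matrix.SpecialLinearGroup (Fin 3) ℝ)
      : Matrix (Fin 3) (Fin 3) ℝ) ^ 2
      = 3 + xv a₁ a₂ (γ k)^2 + xv c₁ c₂ (γ k)^2 + zv a₁ b₁ c₁ a₂ b₂ c₂ (γ k)^2 := by
    rw [hcoe, frob_explicit, Real.sq_sqrt (by positivity)]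
  have hden : frobNorm ((((A ^ (γ k).1 * B ^ (γ k).2)⁻¹ : Matrix.SpecialLinearGroup (Fin 3) ℝ))
      : Matrix (Fin 3) (Fin 3) ℝ)
      = Real.sqrt (3 + xv a₁ a₂ (γ k)^2 + xv c₁ c₂ (γ k)^2 +
          (xv a₁ a₂ (γ k) * xv c₁ c₂ (γ k) - zv a₁ b₁ c₁ a₂ b₂ c₂ (γ k))^2) := by
    rw [hinv, frob_explicit]
    congr 1
    ring
  simp only at hk
  rw [hnum, hden] at hk
  have := hC k
  linarith
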